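/- Let R be a commutative ring and I ⊆ R an ideal with I² = 0. Let J be an ideal of R[x₁, …, x_d] all of whose elements have coefficients in I and zero constant coefficient, set A = R[x₁, …, x_d]/J with aᵢ the image of xᵢ, and for b ∈ I^d let Ψ_b : A → R be the R-algebra homomorphism with Ψ_b(aᵢ) = bᵢ. Suppose α* : A → A ⊗_R A is an R-algebra homomorphism such that for each i, α*(aᵢ) − (aᵢ ⊗ 1 + 1 ⊗ aᵢ) lies in I·K, where K is the ideal of A ⊗_R A generated by the elements a_j ⊗ 1 and 1 ⊗ a_j (1 ≤ j ≤ d). Then for all b, c ∈ I^d, the composite (Ψ_b ⊗ Ψ_c) ∘ α* : A → R equals Ψ_{b+c}, where Ψ_b ⊗ Ψ_c : A ⊗_R A → R is the R-algebra homomorphism induced by Ψ_b and Ψ_c. -/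
import Mathlib


set_option synthInstance.maxHeartbeats 1000000
set_option maxHeartbeats 1000000

open TensorProduct

/-- Let `R` be a commutative ring and `I ⊆ R` an ideal with `I² = 0`.  Let `J` be an
ideal of `R[x₁, …, x_d]` all of whose elements have all coefficients in `I` and zero
constant coefficient, let `A = R[x₁, …, x_d]/J` with `aᵢ` the image of `xᵢ`, and for
`b ∈ Iᵈ` let `Ψ_b : A → R` denote the `R`-algebra homomorphism with `Ψ_b(aᵢ) = bᵢ`
(quantified here by its defining property, which determines it uniquely).  Suppose
`α* : A → A ⊗[R] A` is an `R`-algebra homomorphism such that for each `i`,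
`α*(aᵢ) − (aᵢ ⊗ 1 + 1 ⊗ aᵢ)` lies in `I·K`, where `K` is the ideal of `A ⊗[R] A`
generated by the `a_j ⊗ 1` and `1 ⊗ a_j`.  Then for all `b, c ∈ Iᵈ` the composite
`(Ψ_b ⊗ Ψ_c) ∘ α* : A → R` equals `Ψ_{b+c}`. -/
theorem comultiplication_additivity_on_sq_zero_points
    (R : Type*) [CommRing R] (I : Ideal R) (hI : I ^ 2 = ⊥)
    (d : ℕ) (J : Ideal (MvPolynomial (Fin d) R))
    (hJ : ∀ p ∈ J, (∀ m, MvPolynomial.coeff m p ∈ I) ∧ MvPolynomial.coeff 0 p = 0)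
    (K : Ideal ((MvPolynomial (Fin d) R ⧸ J) ⊗[R] (MvPolynomial (Fin d) R ⧸ J)))
    (hK : K = Ideal.span
      ((Set.range fun j : Fin d =>
          (Ideal.Quotient.mk J (MvPolynomial.X j)) ⊗ₜ[R] (1 : MvPolynomial (Fin d) R ⧸ J)) ∪
       (Set.range fun j : Fin d =>
          (1 : MvPolynomial (Fin d) R ⧸ J) ⊗ₜ[R] (Ideal.Quotient.mk J (MvPolynomial.X j)))))
    (αstar : (MvPolynomial (Fin d) R ⧸ J) →ₐ[R]
      (MvPolynomial (Fin d) R ⧸ J) ⊗[R] (MvPolynomial (Fin d) R ⧸ J))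
    (hα : ∀ i : Fin d,
      αstar (Ideal.Quotient.mk J (MvPolynomial.X i))
          - ((Ideal.Quotient.mk J (MvPolynomial.X i)) ⊗ₜ[R] 1
            + 1 ⊗ₜ[R] (Ideal.Quotient.mk J (MvPolynomial.X i)))
        ∈ (I • (Submodule.restrictScalars R K) :
            Submodule R ((MvPolynomial (Fin d) R ⧸ J) ⊗[R] (MvPolynomial (Fin d) R ⧸ J))))
    (b c : Fin d → R) (hb : ∀ i, b i ∈ I) (hc : ∀ i, c i ∈ I)
    (Ψb Ψc Ψbc : (MvPolynomial (Fin d) R ⧸ J) →ₐ[R] R)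
    (hΨb : ∀ i, Ψb (Ideal.Quotient.mk J (MvPolynomial.X i)) = b i)
    (hΨc : ∀ i, Ψc (Ideal.Quotient.mk J (MvPolynomial.X i)) = c i)
    (hΨbc : ∀ i, Ψbc (Ideal.Quotient.mk J (MvPolynomial.X i)) = b i + c i) :
    (Algebra.TensorProduct.productMap Ψb Ψc).comp αstar = Ψbc := by

  set φ := Algebra.TensorProduct.productMap Ψb Ψc with hφ
  -- φ maps K into I
  have hKI : ∀ k ∈ K, φ k ∈ I := by
    intro k hk
    rw [hK] at hk
    refine Submodule.span_induction ?_ ?_ ?_ ?_ hk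
    · rintro x (⟨j, rfl⟩ | ⟨j, rfl⟩)
      · simpa [φ, Algebra.TensorProduct.productMap_apply_tmul, hΨb] using hb j
      · simpa [φ, Algebra.TensorProduct.productMap_apply_tmul, hΨc] using hc j
    · simp
    · intro x y _ _ hx hy; simpa using add_mem hx hy
    · intro r x _ hx
      rw [smul_eq_mul, map_mul]
      exact Ideal.mul_mem_left I _ hx
  have hzero : ∀ t ∈ (I • (Submodule.restrictScalars R K) :
      Submodule R ((MvPolynomial (Fin d) R ⧸ J) ⊗[R] (MvPolynomial (Fin d) R ⧸ J))),
      φ t = 0 := by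
    intro t ht
    refine Submodule.smul_induction_on ht ?_ ?_
    · intro r hr k hk
      have h1 : φ (r • k) = r * φ k := by
        rw [map_smul, smul_eq_mul]
      have h2 : r * φ k ∈ I ^ 2 := by
        rw [pow_two]; exact Ideal.mul_mem_mul hr (hKI k hk)
      rw [h1]
      simpa [hI] using h2
    · intro x y hx hy; rw [map_add, hx, hy, add_zero]
  apply AlgHom.ext
  intro a
  obtain ⟨p, rfl⟩ := Ideal.Quotient.mk_surjective a
  have key : ∀ i : Fin d,
      (φ.comp αstar) (Ideal.Quotient.mk J (MvPolynomial.X i))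
        = Ψbc (Ideal.Quotient.mk J (MvPolynomial.X i)) := by
    intro i
    have ht := hzero _ (hα i)
    rw [map_sub, map_add] at ht
    have := sub_eq_zero.mp ht
    simp only [AlgHom.comp_apply, this, φ,
      Algebra.TensorProduct.productMap_apply_tmul, map_one, mul_one, one_mul,
      hΨb, hΨc, hΨbc]
  have heq : φ.comp αstar = Ψbc := by
    have h2 : (φ.comp αstar).comp (Ideal.Quotient.mkₐ R J)
        = Ψbc.comp (Ideal.Quotient.mkₐ R J) := by
      apply MvPolynomial.algHom_ext
      intro i
      simpa using key i
    ext a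
    obtain ⟨q, rfl⟩ := Ideal.Quotient.mk_surjective a
    exact AlgHom.congr_fun h2 q
  exact congrFun (congrArg _ heq) _
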